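/- Given |G| ≥ |P_f(Q) × {0,1}| (P_f(Q) the finite subsets of Q) and F = ⋃_{n≥0} G^{G^n} (the full function domain), the system SLKVF + EXT is sound and complete for LKVF: a formula is provable in SLKVF + EXT if and only if it is true at every world of every model over (G,F). -/

import Mathlib

open scoped Classical

/-! Single-agent language `LKVF` with operators `Kv`, `Kf` and `K`. -/

inductive Formula (P Q : Type) : Type where
  | top : Formula P Q
  | atom : P → Formula P Q
  | Kv : Q → Formula P Q
  | Kf : Finset Q → Q → Formula P Q
  | and : Formula P Q → Formula P Q → Formula P Q
  | not : Formula P Q → Formula P Q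
  | K : Formula P Q → Formula P Q

namespace Formula

variable {P Q : Type}

/-- Material implication, defined from `and` and `not`. -/
def imp (φ ψ : Formula P Q) : Formula P Q := Formula.not (Formula.and φ (Formula.not ψ))

/-- Falsum. -/
def bot : Formula P Q := Formula.not Formula.top

/-- Disjunction. -/
def or (φ ψ : Formula P Q) : Formula P Q :=
  Formula.not (Formula.and (Formula.not φ) (Formula.not ψ))

end Formula

variable {P Q G : Type}

/-- Finite conjunction of a list of formulas. -/
def conj : List (Formula P Q) → Formula P Q
  | [] => Formula.top
  | φ :: l => Formula.and φ (conj l)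

/-- Finite disjunction of a list of formulas. -/
def disj : List (Formula P Q) → Formula P Q
  | [] => Formula.bot
  | φ :: l => Formula.or φ (disj l)

/-- `φ` is a propositional tautology: every Boolean valuation commuting with the
Boolean connectives makes it true. -/
def IsTaut (φ : Formula P Q) : Prop :=
  ∀ v : Formula P Q → Bool,
    v Formula.top = true →
    (∀ α β, v (Formula.and α β) = (v α && v β)) →
    (∀ α, v (Formula.not α) = (! v α)) →
    v φ = true

section Axioms

variable (P Q : Type) [LinearOrder Q]

/-- `⋀_{d ∈ D} Kf(C,d)`. -/
def finConjKf (C D : Finset Q) : Formula P Q :=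
  conj ((D.sort (· ≤ ·)).map fun d => Formula.Kf C d)

/-- `⋀_{c ∈ C} Kv(c)`. -/
def finConjKv (C : Finset Q) : Formula P Q :=
  conj ((C.sort (· ≤ ·)).map fun c => Formula.Kv c)

/-- The axioms of the base system `SLKVF`. -/
inductive SLKVF : Formula P Q → Prop where
  | taut {φ : Formula P Q} : IsTaut φ → SLKVF φ
  | axK (φ ψ : Formula P Q) :
      SLKVF (Formula.imp (Formula.K (Formula.imp φ ψ))
        (Formula.imp (Formula.K φ) (Formula.K ψ)))
  | axT (φ : Formula P Q) : SLKVF (Formula.imp (Formula.K φ) φ)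
  | ax4 (φ : Formula P Q) : SLKVF (Formula.imp (Formula.K φ) (Formula.K (Formula.K φ)))
  | ax5 (φ : Formula P Q) :
      SLKVF (Formula.imp (Formula.not (Formula.K φ)) (Formula.K (Formula.not (Formula.K φ))))
  | kv4 (d : Q) : SLKVF (Formula.imp (Formula.Kv d) (Formula.K (Formula.Kv d)))
  | kv5 (d : Q) :
      SLKVF (Formula.imp (Formula.not (Formula.Kv d)) (Formula.K (Formula.not (Formula.Kv d))))
  | kf4 (C : Finset Q) (d : Q) :
      SLKVF (Formula.imp (Formula.Kf C d) (Formula.K (Formula.Kf C d)))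
  | kf5 (C : Finset Q) (d : Q) :
      SLKVF (Formula.imp (Formula.not (Formula.Kf C d))
        (Formula.K (Formula.not (Formula.Kf C d))))
  | proj {C : Finset Q} {c : Q} : c ∈ C → SLKVF (Formula.Kf C c)
  | tran (C D : Finset Q) (e : Q) :
      SLKVF (Formula.imp (Formula.and (finConjKf P Q C D) (Formula.Kf D e)) (Formula.Kf C e))
  | vf (C : Finset Q) (d : Q) :
      SLKVF (Formula.imp (Formula.and (finConjKv P Q C) (Formula.Kf C d)) (Formula.Kv d))

end Axioms

/-- Provability from an axiom set `Ax` with rules modus ponens and necessitation. -/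
inductive Prov (Ax : Formula P Q → Prop) : Formula P Q → Prop where
  | ax {φ : Formula P Q} : Ax φ → Prov Ax φ
  | mp {φ ψ : Formula P Q} : Prov Ax (Formula.imp φ ψ) → Prov Ax φ → Prov Ax ψ
  | nec {φ : Formula P Q} : Prov Ax φ → Prov Ax (Formula.K φ)

/-- `Γ` is consistent: no finite conjunction of its members proves `⊥`. -/
def Consistent (Ax : Formula P Q → Prop) (Γ : Set (Formula P Q)) : Prop :=
  ¬ ∃ L : List (Formula P Q), (∀ φ ∈ L, φ ∈ Γ) ∧ Prov Ax (Formula.imp (conj L) Formula.bot)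

/-- `Γ` is maximal consistent. -/
def MCS (Ax : Formula P Q → Prop) (Γ : Set (Formula P Q)) : Prop :=
  Consistent Ax Γ ∧ ∀ φ : Formula P Q, φ ∈ Γ ∨ Formula.not φ ∈ Γ

/-! Function domains: sets of finitary functions on the value domain `G`. -/

/-- A function domain on `G`: a set of `n`-ary functions on `G` for various `n`. -/
abbrev FnDom (G : Type) : Type := Set (Σ n : ℕ, (Fin n → G) → G)

/-- `F` contains all projection functions `id_{i,j}` for `0 < i ≤ j`. -/
def hasProjections (F : FnDom G) : Prop :=
  ∀ (j : ℕ) (k : Fin j), (⟨j, fun x => x k⟩ : Σ n : ℕ, (Fin n → G) → G) ∈ F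

/-- `F` is closed under composition: for an `n`-ary `f ∈ F` with `n ≥ 1` and
`m`-ary `g₁, …, gₙ ∈ F`, the composition `f(g₁(·),…,gₙ(·))` is in `F`. -/
def closedComp (F : FnDom G) : Prop :=
  ∀ (n m : ℕ), 0 < n → ∀ f : (Fin n → G) → G,
    (⟨n, f⟩ : Σ n : ℕ, (Fin n → G) → G) ∈ F →
    ∀ g : Fin n → (Fin m → G) → G,
      (∀ k, (⟨m, g k⟩ : Σ n : ℕ, (Fin n → G) → G) ∈ F) →
      (⟨m, fun x => f fun k => g k x⟩ : Σ n : ℕ, (Fin n → G) → G) ∈ F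

/-- The tuple of values of the variables of the finite set `C`, in the fixed
(increasing) order of its elements. -/
def tupleV [LinearOrder Q] (v : Q → G) (C : Finset Q) : Fin C.card → G :=
  fun k => v ((C.sort (· ≤ ·)).get (Fin.cast (Finset.length_sort (s := C) (· ≤ ·)).symm k))

/-- A model of `LKVF`: worlds, an assignment of propositional letters and an
assignment of values to variables. -/
structure Model (P Q G : Type) : Type 1 where
  W : Type
  U : W → P → Prop
  V : W → Q → G

variable [LinearOrder Q]

/-- Truth of a formula at a world of a model, relative to a function domain `F`. -/
def sat (F : FnDom G) (M : Model P Q G) (w : M.W) : Formula P Q → Prop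
  | Formula.top => True
  | Formula.atom p => M.U w p
  | Formula.Kv d => ∃ x : G, ∀ w' : M.W, M.V w' d = x
  | Formula.Kf C d =>
      ∃ f : (Fin C.card → G) → G,
        (⟨C.card, f⟩ : Σ n : ℕ, (Fin n → G) → G) ∈ F ∧
        ∀ w' : M.W, M.V w' d = f (tupleV (M.V w') C)
  | Formula.and φ ψ => sat F M w φ ∧ sat F M w ψ
  | Formula.not φ => ¬ sat F M w φ
  | Formula.K φ => ∀ w' : M.W, sat F M w' φ

/-- Validity over all models built on the value domain `G` and function domain `F`. -/
def Valid (F : FnDom G) (φ : Formula P Q) : Prop :=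
  ∀ (M : Model P Q G) (w : M.W), sat F M w φ

/-! STATEMENT 7: soundness and completeness of `SLKVF + EXT` for the full
function domain, given `|G| ≥ |P_f(Q) × {0,1}|`. -/

/-- The axiom system `SLKVF + EXT`. -/
def AxExt (P Q : Type) [LinearOrder Q] : Formula P Q → Prop := fun φ =>
  SLKVF P Q φ ∨ ∃ (d : Q) (C : Finset Q), φ = Formula.imp (Formula.Kv d) (Formula.Kf C d)


/-! ### Auxiliary development -/

section AuxDev

variable {P Q : Type} [LinearOrder Q]

local notation "Pr" => Prov (AxExt P Q)

lemma pt {φ : Formula P Q} (h : IsTaut φ) : Pr φ :=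
  Prov.ax (Or.inl (SLKVF.taut h))

lemma t_id (α : Formula P Q) : Pr (α.imp α) := pt (by
  intro v ht ha hn
  simp only [Formula.imp, ha, hn, ht]
  cases v α <;> rfl)

lemma t_k (α β : Formula P Q) : Pr (α.imp (β.imp α)) := pt (by
  intro v ht ha hn
  simp only [Formula.imp, ha, hn, ht]
  cases v α <;> cases v β <;> rfl)

lemma t_trans (α β γ : Formula P Q) :
    Pr ((α.imp β).imp ((β.imp γ).imp (α.imp γ))) := pt (by
  intro v ht ha hn
  simp only [Formula.imp, ha, hn, ht]
  cases v α <;> cases v β <;> cases v γ <;> rfl)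

lemma imp_trans {α β γ : Formula P Q} (h1 : Pr (α.imp β)) (h2 : Pr (β.imp γ)) :
    Pr (α.imp γ) :=
  Prov.mp (Prov.mp (t_trans α β γ) h1) h2


lemma t_and_left (α β : Formula P Q) : Pr ((α.and β).imp α) := pt (by
  intro v ht ha hn
  simp only [Formula.imp, ha, hn, ht]
  cases v α <;> cases v β <;> rfl)

lemma t_and_right (α β : Formula P Q) : Pr ((α.and β).imp β) := pt (by
  intro v ht ha hn
  simp only [Formula.imp, ha, hn, ht]
  cases v α <;> cases v β <;> rfl)

lemma t_and_intro (α β : Formula P Q) : Pr (α.imp (β.imp (α.and β))) := pt (by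
  intro v ht ha hn
  simp only [Formula.imp, ha, hn, ht]
  cases v α <;> cases v β <;> rfl)

lemma t_dne (α : Formula P Q) : Pr ((α.not.not).imp α) := pt (by
  intro v ht ha hn
  simp only [Formula.imp, ha, hn, ht]
  cases v α <;> rfl)

lemma t_mcsbot (α β : Formula P Q) :
    Pr ((α.imp β).imp ((β.not.and α).imp Formula.bot)) := pt (by
  intro v ht ha hn
  simp only [Formula.imp, Formula.bot, ha, hn, ht]
  cases v α <;> cases v β <;> rfl)

lemma t_contra (α : Formula P Q) :
    Pr ((α.and ((α.not).and Formula.top)).imp Formula.bot) := pt (by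
  intro v ht ha hn
  simp only [Formula.imp, Formula.bot, ha, hn, ht]
  cases v α <;> rfl)

lemma t_pair2 (α β : Formula P Q) :
    Pr ((α.and (β.and Formula.top)).imp (α.and β)) := pt (by
  intro v ht ha hn
  simp only [Formula.imp, ha, hn, ht]
  cases v α <;> cases v β <;> rfl)

lemma t_top_and (α : Formula P Q) : Pr (α.imp (Formula.top.and α)) := pt (by
  intro v ht ha hn
  simp only [Formula.imp, ha, hn, ht]
  cases v α <;> rfl)

lemma t_uncurry (α β γ : Formula P Q) :
    Pr ((α.imp (β.imp γ)).imp ((α.and β).imp γ)) := pt (by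
  intro v ht ha hn
  simp only [Formula.imp, ha, hn, ht]
  cases v α <;> cases v β <;> cases v γ <;> rfl)

lemma t_and_mono_r (α β γ : Formula P Q) :
    Pr ((β.imp γ).imp ((α.and β).imp (α.and γ))) := pt (by
  intro v ht ha hn
  simp only [Formula.imp, ha, hn, ht]
  cases v α <;> cases v β <;> cases v γ <;> rfl)

lemma t_assoc (α β γ : Formula P Q) :
    Pr ((α.and (β.and γ)).imp ((α.and β).and γ)) := pt (by
  intro v ht ha hn
  simp only [Formula.imp, ha, hn, ht]
  cases v α <;> cases v β <;> cases v γ <;> rfl)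

lemma t_top : Pr (Formula.top : Formula P Q) := pt (by intro v ht ha hn; exact ht)

-- claim-C tautologies
lemma tc1 (α β γ δ : Formula P Q) :
    Pr ((β.imp (γ.imp δ)).imp ((α.and β).imp (γ.imp (α.and δ)))) := pt (by
  intro v ht ha hn
  simp only [Formula.imp, ha, hn, ht]
  cases v α <;> cases v β <;> cases v γ <;> cases v δ <;> rfl)

lemma tc2 (β γ δ : Formula P Q) :
    Pr ((β.imp (γ.imp δ)).imp (β.imp (γ.imp (γ.and δ)))) := pt (by
  intro v ht ha hn
  simp only [Formula.imp, ha, hn, ht]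
  cases v β <;> cases v γ <;> cases v δ <;> rfl)

lemma tc3 (β γ δ : Formula P Q) :
    Pr ((β.imp (γ.imp δ)).imp ((δ.imp Formula.bot).imp (β.imp γ.not))) := pt (by
  intro v ht ha hn
  simp only [Formula.imp, Formula.bot, ha, hn, ht]
  cases v β <;> cases v γ <;> cases v δ <;> rfl)

lemma t_combine2 (α β γ : Formula P Q) :
    Pr ((α.imp γ.not).imp ((β.imp γ.not.not).imp ((α.and β).imp Formula.bot))) := pt (by
  intro v ht ha hn
  simp only [Formula.imp, Formula.bot, ha, hn, ht]
  cases v α <;> cases v β <;> cases v γ <;> rfl)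

lemma t_final (α β : Formula P Q) :
    Pr ((Formula.top.imp (α.not.imp β)).imp ((β.imp Formula.bot).imp α)) := pt (by
  intro v ht ha hn
  simp only [Formula.imp, Formula.bot, ha, hn, ht]
  cases v α <;> cases v β <;> rfl)

/-! ### Modal toolkit -/

lemma axK' (α β : Formula P Q) : Pr ((Formula.K (α.imp β)).imp ((Formula.K α).imp (Formula.K β))) :=
  Prov.ax (Or.inl (SLKVF.axK α β))

lemma Kmono {α β : Formula P Q} (h : Pr (α.imp β)) :
    Pr ((Formula.K α).imp (Formula.K β)) :=
  Prov.mp (axK' α β) (Prov.nec h)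

lemma K_and (α β : Formula P Q) :
    Pr (((Formula.K α).and (Formula.K β)).imp (Formula.K (α.and β))) := by
  have h1 : Pr ((Formula.K α).imp (Formula.K (β.imp (α.and β)))) := Kmono (t_and_intro α β)
  have h2 : Pr ((Formula.K α).imp ((Formula.K β).imp (Formula.K (α.and β)))) :=
    imp_trans h1 (axK' β (α.and β))
  exact Prov.mp (t_uncurry _ _ _) h2

lemma conj_mapK (L : List (Formula P Q)) :
    Pr ((conj (L.map Formula.K)).imp (Formula.K (conj L))) := by
  induction L with
  | nil =>
      exact Prov.mp (t_k (Formula.K (conj ([] : List (Formula P Q)))) Formula.top)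
        (Prov.nec t_top)
  | cons φ L ih =>
      have h1 : Pr (((Formula.K φ).and (conj (L.map Formula.K))).imp
          ((Formula.K φ).and (Formula.K (conj L)))) :=
        Prov.mp (t_and_mono_r _ _ _) ih
      exact imp_trans h1 (K_and φ (conj L))

lemma Kdistrib {L : List (Formula P Q)} {φ : Formula P Q}
    (h : Pr ((conj L).imp φ)) : Pr ((conj (L.map Formula.K)).imp (Formula.K φ)) :=
  imp_trans (conj_mapK L) (Kmono h)

lemma conj_append (L1 L2 : List (Formula P Q)) :
    Pr ((conj (L1 ++ L2)).imp ((conj L1).and (conj L2))) := by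
  induction L1 with
  | nil => exact t_top_and _
  | cons φ L1 ih =>
      have h1 : Pr ((φ.and (conj (L1 ++ L2))).imp (φ.and ((conj L1).and (conj L2)))) :=
        Prov.mp (t_and_mono_r _ _ _) ih
      exact imp_trans h1 (t_assoc _ _ _)

/-! ### MCS facts -/

lemma mcs_mem_of_list {Γ : Set (Formula P Q)} (hΓ : MCS (AxExt P Q) Γ)
    {L : List (Formula P Q)} (hL : ∀ φ ∈ L, φ ∈ Γ) {ψ : Formula P Q}
    (h : Pr ((conj L).imp ψ)) : ψ ∈ Γ := by
  rcases hΓ.2 ψ with h' | h'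
  · exact h'
  · exfalso
    exact hΓ.1 ⟨ψ.not :: L, by
      intro φ hφ
      rcases List.mem_cons.1 hφ with rfl | hφ
      · exact h'
      · exact hL φ hφ, Prov.mp (t_mcsbot _ _) h⟩

lemma mcs_mem_of_prov {Γ : Set (Formula P Q)} (hΓ : MCS (AxExt P Q) Γ)
    {ψ : Formula P Q} (h : Pr ψ) : ψ ∈ Γ :=
  mcs_mem_of_list hΓ (L := []) (by simp) (Prov.mp (t_k ψ Formula.top) h)

lemma mcs_mem_mp {Γ : Set (Formula P Q)} (hΓ : MCS (AxExt P Q) Γ)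
    {ψ χ : Formula P Q} (h1 : ψ ∈ Γ) (h2 : Pr (ψ.imp χ)) : χ ∈ Γ :=
  mcs_mem_of_list hΓ (L := [ψ]) (by simpa using h1)
    (imp_trans (t_and_left ψ Formula.top) h2)

lemma mcs_not_mem_iff {Γ : Set (Formula P Q)} (hΓ : MCS (AxExt P Q) Γ)
    {ψ : Formula P Q} : ψ.not ∈ Γ ↔ ψ ∉ Γ := by
  constructor
  · intro h1 h2
    exact hΓ.1 ⟨[ψ, ψ.not], by
      intro φ hφ; simp at hφ; rcases hφ with rfl | rfl <;> assumption,
      t_contra ψ⟩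
  · intro h
    rcases hΓ.2 ψ with h' | h'
    · exact absurd h' h
    · exact h'

lemma mcs_and_mem_iff {Γ : Set (Formula P Q)} (hΓ : MCS (AxExt P Q) Γ)
    {ψ χ : Formula P Q} : ψ.and χ ∈ Γ ↔ ψ ∈ Γ ∧ χ ∈ Γ := by
  constructor
  · intro h
    exact ⟨mcs_mem_mp hΓ h (t_and_left _ _), mcs_mem_mp hΓ h (t_and_right _ _)⟩
  · rintro ⟨h1, h2⟩
    exact mcs_mem_of_list hΓ (L := [ψ, χ]) (by
      intro φ hφ; simp at hφ; rcases hφ with rfl | rfl <;> assumption)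
      (t_pair2 ψ χ)

lemma mcs_conj_mem {Γ : Set (Formula P Q)} (hΓ : MCS (AxExt P Q) Γ)
    {L : List (Formula P Q)} (hL : ∀ φ ∈ L, φ ∈ Γ) : conj L ∈ Γ := by
  induction L with
  | nil => exact mcs_mem_of_prov hΓ t_top
  | cons φ L ih =>
      exact (mcs_and_mem_iff hΓ).2 ⟨hL φ (by simp),
        ih fun χ hχ => hL χ (by simp [hχ])⟩


/-! ### Extraction and Lindenbaum -/

lemma extract_claim (Γ : Set (Formula P Q)) (χ : Formula P Q) :
    ∀ L : List (Formula P Q), (∀ φ ∈ L, φ ∈ Γ ∨ φ = χ) →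
      ∃ L' : List (Formula P Q), (∀ φ ∈ L', φ ∈ Γ) ∧
        Pr ((conj L').imp (χ.imp (conj L))) := by
  intro L
  induction L with
  | nil =>
      intro _
      exact ⟨[], by simp, Prov.mp (t_k _ _) (Prov.mp (t_k _ _) t_top)⟩
  | cons φ L ih =>
      intro hL
      obtain ⟨L', hL', hP⟩ := ih fun ψ hψ => hL ψ (by simp [hψ])
      rcases hL φ (by simp) with hφ | rfl
      · refine ⟨φ :: L', ?_, ?_⟩
        · intro ψ hψ
          rcases List.mem_cons.1 hψ with rfl | hψ
          · exact hφ
          · exact hL' ψ hψ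
        · exact Prov.mp (tc1 φ (conj L') χ (conj L)) hP
      · exact ⟨L', hL', Prov.mp (tc2 (conj L') φ (conj L)) hP⟩

lemma extract_insert {Γ : Set (Formula P Q)} {χ : Formula P Q}
    (h : ¬ Consistent (AxExt P Q) (insert χ Γ)) :
    ∃ L' : List (Formula P Q), (∀ φ ∈ L', φ ∈ Γ) ∧ Pr ((conj L').imp χ.not) := by
  rw [Consistent, not_not] at h
  obtain ⟨L, hL, hP⟩ := h
  obtain ⟨L', hL', hP'⟩ := extract_claim Γ χ L (by
    intro φ hφ
    rcases hL φ hφ with h1 | h1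
    · exact Or.inr h1
    · exact Or.inl h1)
  exact ⟨L', hL', Prov.mp (Prov.mp (tc3 (conj L') χ (conj L)) hP') hP⟩

lemma consistent_extend {Γ : Set (Formula P Q)} (h : Consistent (AxExt P Q) Γ) :
    ∃ Δ, MCS (AxExt P Q) Δ ∧ Γ ⊆ Δ := by
  obtain ⟨Δ, hΔsub, hmaxl⟩ :=
    zorn_subset_nonempty {Δ | Consistent (AxExt P Q) Δ ∧ Γ ⊆ Δ}
      (fun c hc hchain ⟨Δ₀, hΔ₀⟩ => by
        refine ⟨⋃₀ c, ⟨?_, (hc hΔ₀).2.trans (Set.subset_sUnion_of_mem hΔ₀)⟩,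
          fun s hs => Set.subset_sUnion_of_mem hs⟩
        rintro ⟨L, hL, hP⟩
        -- all elements of L lie in some single member of the chain
        have : ∃ Δ ∈ c, ∀ φ ∈ L, φ ∈ Δ := by
          clear hP
          induction L with
          | nil => exact ⟨Δ₀, hΔ₀, by simp⟩
          | cons φ L ih =>
              obtain ⟨Δ, hΔc, hΔ⟩ := ih fun ψ hψ => hL ψ (by simp [hψ])
              obtain ⟨Δ', hΔ'c, hφ⟩ := hL φ (by simp)
              rcases hchain.total hΔc hΔ'c with hsub | hsub
              · exact ⟨Δ', hΔ'c, by
                  intro ψ hψ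
                  rcases List.mem_cons.1 hψ with rfl | hψ
                  · exact hφ
                  · exact hsub (hΔ ψ hψ)⟩
              · exact ⟨Δ, hΔc, by
                  intro ψ hψ
                  rcases List.mem_cons.1 hψ with rfl | hψ
                  · exact hsub hφ
                  · exact hΔ ψ hψ⟩
        obtain ⟨Δ, hΔc, hΔ⟩ := this
        exact (hc hΔc).1 ⟨L, hΔ, hP⟩) Γ ⟨h, subset_rfl⟩
  obtain ⟨hΔcon, -⟩ := hmaxl.prop
  refine ⟨Δ, ⟨hΔcon, ?_⟩, hΔsub⟩
  intro φ
  by_contra hcon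
  push_neg at hcon
  obtain ⟨h1, h2⟩ := hcon
  -- both insertions must be inconsistent, else maximality is violated
  have hins : ∀ χ : Formula P Q, χ ∉ Δ → ¬ Consistent (AxExt P Q) (insert χ Δ) := by
    intro χ hχ hcons
    exact hχ (hmaxl.2 ⟨hcons, hΔsub.trans (Set.subset_insert _ _)⟩
      (Set.subset_insert _ _) (Set.mem_insert χ Δ))
  obtain ⟨L1, hL1, hP1⟩ := extract_insert (hins φ h1)
  obtain ⟨L2, hL2, hP2⟩ := extract_insert (hins φ.not h2)
  refine hΔcon ⟨L1 ++ L2, by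
    intro ψ hψ
    rcases List.mem_append.1 hψ with hψ | hψ
    · exact hL1 ψ hψ
    · exact hL2 ψ hψ, ?_⟩
  exact imp_trans (conj_append L1 L2)
    (Prov.mp (Prov.mp (t_combine2 (conj L1) (conj L2) φ) hP1) hP2)

/-! ### The box lemma and transfer lemmas -/

/-- Formulas known in `Γ₀`. -/
def ThSet (Γ₀ : Set (Formula P Q)) : Set (Formula P Q) := {χ | Formula.K χ ∈ Γ₀}

lemma box_iff {Γ₀ : Set (Formula P Q)} (hΓ₀ : MCS (AxExt P Q) Γ₀) (ψ : Formula P Q) :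
    Formula.K ψ ∈ Γ₀ ↔ ∀ Δ, MCS (AxExt P Q) Δ → ThSet Γ₀ ⊆ Δ → ψ ∈ Δ := by
  constructor
  · intro h Δ hΔ hsub
    exact hsub h
  · intro h
    by_contra hK
    have hcons : Consistent (AxExt P Q) (insert ψ.not (ThSet Γ₀)) := by
      intro hbad
      obtain ⟨L, hL, hP⟩ := extract_insert (not_not.2 hbad)
      have hP2 : Pr ((conj (L.map Formula.K)).imp (Formula.K ψ)) :=
        Kdistrib (imp_trans hP (t_dne ψ))
      exact hK (mcs_mem_of_list hΓ₀ (by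
        intro φ hφ
        obtain ⟨χ, hχ, rfl⟩ := List.mem_map.1 hφ
        exact hL χ hχ) hP2)
    obtain ⟨Δ, hΔ, hsub⟩ := consistent_extend hcons
    have hψΔ := h Δ hΔ (Set.Subset.trans (Set.subset_insert _ _) hsub)
    exact (mcs_not_mem_iff hΔ).1 (hsub (Set.mem_insert _ _)) hψΔ

lemma transfer {Γ₀ Δ : Set (Formula P Q)} (hΓ₀ : MCS (AxExt P Q) Γ₀)
    (hΔsub : ThSet Γ₀ ⊆ Δ) {χ : Formula P Q}
    (h4 : Pr (χ.imp (Formula.K χ))) (h5 : Pr (χ.not.imp (Formula.K χ.not)))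
    (hΔ : MCS (AxExt P Q) Δ) : χ ∈ Γ₀ ↔ χ ∈ Δ := by
  constructor
  · intro h
    exact hΔsub (mcs_mem_mp hΓ₀ h h4)
  · intro h
    by_contra h'
    have : χ.not ∈ Γ₀ := (mcs_not_mem_iff hΓ₀).2 h'
    have : χ.not ∈ Δ := hΔsub (mcs_mem_mp hΓ₀ this h5)
    exact (mcs_not_mem_iff hΔ).1 this h


/-! ### Semantic lemmas -/

lemma tupleV_eq_iff {G : Type} (v v' : Q → G) (C : Finset Q) :
    tupleV v C = tupleV v' C ↔ ∀ c ∈ C, v c = v' c := by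
  constructor
  · intro h c hc
    have hc' : c ∈ C.sort (· ≤ ·) := (Finset.mem_sort _).2 hc
    obtain ⟨i, hi⟩ := List.mem_iff_get.1 hc'
    have h2 := congrFun h (Fin.cast (Finset.length_sort (s := C) (· ≤ ·)) i)
    rw [← hi]
    exact h2
  · intro h
    funext k
    exact h _ ((Finset.mem_sort _).1 (List.get_mem _ _))

lemma satKf_iff {G : Type} [Nonempty G] (M : Model P Q G) (w : M.W)
    (C : Finset Q) (d : Q) :
    sat (Set.univ : FnDom G) M w (Formula.Kf C d) ↔
      ∀ w₁ w₂ : M.W, (∀ c ∈ C, M.V w₁ c = M.V w₂ c) → M.V w₁ d = M.V w₂ d := by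
  constructor
  · rintro ⟨f, -, hf⟩ w₁ w₂ hag
    rw [hf w₁, hf w₂]
    exact congrArg f ((tupleV_eq_iff _ _ _).2 hag)
  · intro h
    refine ⟨fun x => if hx : ∃ w', tupleV (M.V w') C = x then M.V hx.choose d
      else Classical.arbitrary G, trivial, ?_⟩
    intro w'
    have hex : ∃ w'', tupleV (M.V w'') C = tupleV (M.V w') C := ⟨w', rfl⟩
    show M.V w' d = if hx : ∃ w'', tupleV (M.V w'') C = tupleV (M.V w') C then
      M.V hx.choose d else Classical.arbitrary G
    rw [dif_pos hex]
    exact h w' hex.choose ((tupleV_eq_iff _ _ _).1 hex.choose_spec.symm)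

lemma sat_imp {G : Type} {F : FnDom G} {M : Model P Q G} {w : M.W} {φ ψ : Formula P Q} :
    sat F M w (φ.imp ψ) ↔ (sat F M w φ → sat F M w ψ) := by
  simp only [Formula.imp, sat]
  tauto

lemma sat_conj {G : Type} (F : FnDom G) (M : Model P Q G) (w : M.W)
    (L : List (Formula P Q)) : sat F M w (conj L) ↔ ∀ φ ∈ L, sat F M w φ := by
  induction L with
  | nil => simp [conj, sat]
  | cons φ L ih => simp [conj, sat, ih]

/-! ### Soundness -/

lemma soundness {G : Type} [Nonempty G] {φ : Formula P Q}
    (h : Prov (AxExt P Q) φ) : Valid (Set.univ : FnDom G) φ := by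
  induction h with
  | mp _ _ ih1 ih2 => exact fun M w => sat_imp.1 (ih1 M w) (ih2 M w)
  | nec _ ih => exact fun M w w' => ih M w'
  | ax hax =>
      rcases hax with hax | ⟨d, C, rfl⟩
      · cases hax with
        | taut htaut =>
            intro M w
            have hv := htaut (fun χ => decide (sat (Set.univ : FnDom G) M w χ))
              (by simp [sat]; exact @decide_eq_true _ (Classical.propDecidable _) trivial)
              (fun α β => by
                by_cases h1 : sat (Set.univ : FnDom G) M w α <;>
                  by_cases h2 : sat (Set.univ : FnDom G) M w β <;>
                  simp [sat, h1, h2])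
              (fun α => by
                by_cases h1 : sat (Set.univ : FnDom G) M w α <;> simp [sat, h1])
            exact of_decide_eq_true hv
        | axK φ ψ =>
            intro M w
            rw [sat_imp]
            intro h1
            rw [sat_imp]
            intro h2
            exact fun w' => sat_imp.1 (h1 w') (h2 w')
        | axT φ =>
            intro M w
            rw [sat_imp]
            intro h1
            exact h1 w
        | ax4 φ =>
            intro M w
            rw [sat_imp]
            exact fun h1 _ => h1
        | ax5 φ =>
            intro M w
            rw [sat_imp]
            exact fun h1 _ => h1
        | kv4 d =>
            intro M w
            rw [sat_imp]
            exact fun h1 _ => h1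
        | kv5 d =>
            intro M w
            rw [sat_imp]
            exact fun h1 _ => h1
        | kf4 C d =>
            intro M w
            rw [sat_imp]
            exact fun h1 _ => h1
        | kf5 C d =>
            intro M w
            rw [sat_imp]
            exact fun h1 _ => h1
        | proj hc =>
            intro M w
            rw [satKf_iff]
            intro w₁ w₂ hag
            exact hag _ hc
        | tran C D e =>
            intro M w
            rw [sat_imp]
            intro h1
            have h2 : sat (Set.univ : FnDom G) M w (Formula.Kf D e) := h1.2
            have h3 : ∀ d ∈ D, sat (Set.univ : FnDom G) M w (Formula.Kf C d) := by
              intro d hd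
              exact (sat_conj _ _ _ _).1 h1.1 _
                (List.mem_map.2 ⟨d, (Finset.mem_sort _).2 hd, rfl⟩)
            rw [satKf_iff]
            intro w₁ w₂ hag
            exact (satKf_iff M w D e).1 h2 w₁ w₂
              (fun c hc => (satKf_iff M w C c).1 (h3 c hc) w₁ w₂ hag)
        | vf C d =>
            intro M w
            rw [sat_imp]
            intro h1
            have h2 : ∀ c ∈ C, ∃ x : G, ∀ w' : M.W, M.V w' c = x := by
              intro c hc
              exact (sat_conj _ _ _ _).1 h1.1 _
                (List.mem_map.2 ⟨c, (Finset.mem_sort _).2 hc, rfl⟩)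
            refine ⟨M.V w d, fun w' => ?_⟩
            apply (satKf_iff M w C d).1 h1.2 w' w
            intro c hc
            obtain ⟨x, hx⟩ := h2 c hc
            rw [hx w', hx w]
      · -- EXT
        intro M w
        rw [sat_imp]
        rintro ⟨x, hx⟩
        rw [satKf_iff]
        intro w₁ w₂ _
        rw [hx w₁, hx w₂]


/-! ### Canonical model -/

variable {G : Type}

/-- Canonical valuation on the index set `Option (Finset Q)`. -/
noncomputable def canonV (e : (Finset Q × Bool) ↪ G) (Γ₀ : Set (Formula P Q)) :
    Option (Finset Q) → Q → G
  | none, _ => e (∅, true)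
  | some C, q => if Formula.Kf C q ∈ Γ₀ then e (∅, true) else e (C, false)

lemma kf_proj_mem {Γ₀ : Set (Formula P Q)} (hΓ₀ : MCS (AxExt P Q) Γ₀)
    {C : Finset Q} {c : Q} (hc : c ∈ C) : Formula.Kf C c ∈ Γ₀ :=
  mcs_mem_of_prov hΓ₀ (Prov.ax (Or.inl (SLKVF.proj hc)))

lemma kf_trans_mem {Γ₀ : Set (Formula P Q)} (hΓ₀ : MCS (AxExt P Q) Γ₀)
    {C D : Finset Q} {d : Q}
    (h1 : ∀ x ∈ D, Formula.Kf C x ∈ Γ₀) (h2 : Formula.Kf D d ∈ Γ₀) :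
    Formula.Kf C d ∈ Γ₀ := by
  have hconj : finConjKf P Q C D ∈ Γ₀ := mcs_conj_mem hΓ₀ (by
    intro ψ hψ
    obtain ⟨x, hx, rfl⟩ := List.mem_map.1 hψ
    exact h1 x ((Finset.mem_sort _).1 hx))
  exact mcs_mem_mp hΓ₀ ((mcs_and_mem_iff hΓ₀).2 ⟨hconj, h2⟩)
    (Prov.ax (Or.inl (SLKVF.tran C D d)))

lemma kv_iff_kf_empty {Γ₀ : Set (Formula P Q)} (hΓ₀ : MCS (AxExt P Q) Γ₀) (d : Q) :
    Formula.Kv d ∈ Γ₀ ↔ Formula.Kf ∅ d ∈ Γ₀ := by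
  have hfcv : finConjKv P Q (∅ : Finset Q) = Formula.top := by
    simp [finConjKv, conj]
  constructor
  · intro h
    exact mcs_mem_mp hΓ₀ h (Prov.ax (Or.inr ⟨d, ∅, rfl⟩))
  · intro h
    have hvf : Pr (((finConjKv P Q (∅ : Finset Q)).and (Formula.Kf ∅ d)).imp
        (Formula.Kv d)) := Prov.ax (Or.inl (SLKVF.vf ∅ d))
    rw [hfcv] at hvf
    exact mcs_mem_mp hΓ₀ h (imp_trans (t_top_and _) hvf)

lemma canonV_dep (e : (Finset Q × Bool) ↪ G) {Γ₀ : Set (Formula P Q)}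
    (hΓ₀ : MCS (AxExt P Q) Γ₀) (C : Finset Q) (d : Q) :
    Formula.Kf C d ∈ Γ₀ ↔
      ∀ g g' : Option (Finset Q),
        (∀ c ∈ C, canonV e Γ₀ g c = canonV e Γ₀ g' c) →
          canonV e Γ₀ g d = canonV e Γ₀ g' d := by
  have hne : ∀ B : Finset Q, e (B, false) ≠ e (∅, true) := by
    intro B h
    have := e.injective h
    simp at this
  constructor
  · intro hmem g g' hag
    have key : ∀ B : Finset Q, (∀ c ∈ C, canonV e Γ₀ (some B) c = e (∅, true)) →
        canonV e Γ₀ (some B) d = e (∅, true) := by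
      intro B hB
      have hBc : ∀ c ∈ C, Formula.Kf B c ∈ Γ₀ := by
        intro c hc
        by_contra hcc
        have h2 := hB c hc
        simp only [canonV, if_neg hcc] at h2
        exact hne B h2
      have hBd : Formula.Kf B d ∈ Γ₀ := kf_trans_mem hΓ₀ hBc hmem
      simp only [canonV, if_pos hBd]
    match g, g' with
    | none, none => rfl
    | none, some B =>
        have := key B (fun c hc => (hag c hc).symm)
        simp only [canonV] at this ⊢
        rw [this]
    | some B, none =>
        have := key B (fun c hc => hag c hc)
        simp only [canonV] at this ⊢
        rw [this]
    | some B, some B' =>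
        by_cases hBB : B = B'
        · subst hBB; rfl
        · have hpair : ∀ c ∈ C, canonV e Γ₀ (some B) c = e (∅, true) ∧
              canonV e Γ₀ (some B') c = e (∅, true) := by
            intro c hc
            have h2 := hag c hc
            by_cases h3 : Formula.Kf B c ∈ Γ₀ <;> by_cases h4 : Formula.Kf B' c ∈ Γ₀ <;>
              simp only [canonV, if_pos, if_neg, h3, h4, if_true, if_false] at h2 ⊢
            · simp [h3, h4]
            · exact absurd h2.symm (hne B')
            · exact absurd h2 (hne B)
            · exact absurd (e.injective h2) (by simp [hBB])
          have k1 := key B (fun c hc => (hpair c hc).1)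
          have k2 := key B' (fun c hc => (hpair c hc).2)
          rw [k1, k2]
  · intro h
    have h2 := h none (some C) (fun c hc => by
      simp only [canonV, if_pos (kf_proj_mem hΓ₀ hc)])
    by_contra hmem
    simp only [canonV, if_neg hmem] at h2
    exact hne C h2.symm

/-- The canonical model built from an MCS `Γ₀`. -/
noncomputable def canonM (e : (Finset Q × Bool) ↪ G) (Γ₀ : Set (Formula P Q)) : Model P Q G where
  W := {Δ : Set (Formula P Q) // MCS (AxExt P Q) Δ ∧ ThSet Γ₀ ⊆ Δ} × Option (Finset Q)
  U := fun w p => Formula.atom p ∈ w.1.1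
  V := fun w q => canonV e Γ₀ w.2 q

lemma truth_lemma (e : (Finset Q × Bool) ↪ G) {Γ₀ : Set (Formula P Q)}
    (hΓ₀ : MCS (AxExt P Q) Γ₀) :
    ∀ (ψ : Formula P Q) (w : (canonM e Γ₀).W),
      sat (Set.univ : FnDom G) (canonM e Γ₀) w ψ ↔ ψ ∈ w.1.1 := by
  haveI : Nonempty G := ⟨e (∅, true)⟩
  intro ψ
  induction ψ with
  | top =>
      intro w
      exact iff_of_true trivial (mcs_mem_of_prov w.1.2.1 t_top)
  | atom p => exact fun w => Iff.rfl
  | Kv d =>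
      intro w
      have step1 : sat (Set.univ : FnDom G) (canonM e Γ₀) w (Formula.Kv d) ↔
          ∀ g g' : Option (Finset Q), canonV e Γ₀ g d = canonV e Γ₀ g' d := by
        constructor
        · rintro ⟨x, hx⟩ g g'
          have h1 := hx (⟨w.1, g⟩ : (canonM e Γ₀).W)
          have h2 := hx (⟨w.1, g'⟩ : (canonM e Γ₀).W)
          rw [show (canonM e Γ₀).V ⟨w.1, g⟩ d = canonV e Γ₀ g d from rfl] at h1
          rw [show (canonM e Γ₀).V ⟨w.1, g'⟩ d = canonV e Γ₀ g' d from rfl] at h2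
          rw [h1, h2]
        · intro h
          exact ⟨canonV e Γ₀ none d, fun w' => h w'.2 none⟩
      have step2 : (∀ g g' : Option (Finset Q), canonV e Γ₀ g d = canonV e Γ₀ g' d) ↔
          Formula.Kf ∅ d ∈ Γ₀ := by
        rw [canonV_dep e hΓ₀ ∅ d]
        exact ⟨fun h g g' _ => h g g', fun h g g' => h g g' (by simp)⟩
      rw [step1, step2, ← kv_iff_kf_empty hΓ₀ d]
      exact transfer hΓ₀ w.1.2.2 (Prov.ax (Or.inl (SLKVF.kv4 d)))
        (Prov.ax (Or.inl (SLKVF.kv5 d))) w.1.2.1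
  | Kf C d =>
      intro w
      have step1 : sat (Set.univ : FnDom G) (canonM e Γ₀) w (Formula.Kf C d) ↔
          ∀ g g' : Option (Finset Q),
            (∀ c ∈ C, canonV e Γ₀ g c = canonV e Γ₀ g' c) →
              canonV e Γ₀ g d = canonV e Γ₀ g' d := by
        rw [satKf_iff]
        constructor
        · intro h g g' hag
          exact h (⟨w.1, g⟩ : (canonM e Γ₀).W) (⟨w.1, g'⟩ : (canonM e Γ₀).W) hag
        · intro h w₁ w₂ hag
          exact h w₁.2 w₂.2 hag
      rw [step1, ← canonV_dep e hΓ₀ C d]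
      exact transfer hΓ₀ w.1.2.2 (Prov.ax (Or.inl (SLKVF.kf4 C d)))
        (Prov.ax (Or.inl (SLKVF.kf5 C d))) w.1.2.1
  | and φ ψ ihφ ihψ =>
      intro w
      have : sat (Set.univ : FnDom G) (canonM e Γ₀) w (φ.and ψ) ↔
          (sat (Set.univ : FnDom G) (canonM e Γ₀) w φ ∧
            sat (Set.univ : FnDom G) (canonM e Γ₀) w ψ) := Iff.rfl
      rw [this, ihφ w, ihψ w]
      exact (mcs_and_mem_iff w.1.2.1).symm
  | not φ ihφ =>
      intro w
      have : sat (Set.univ : FnDom G) (canonM e Γ₀) w φ.not ↔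
          ¬ sat (Set.univ : FnDom G) (canonM e Γ₀) w φ := Iff.rfl
      rw [this, ihφ w]
      exact (mcs_not_mem_iff w.1.2.1).symm
  | K φ ihφ =>
      intro w
      have hiff := transfer hΓ₀ w.1.2.2 (Prov.ax (Or.inl (SLKVF.ax4 φ)))
        (Prov.ax (Or.inl (SLKVF.ax5 φ))) w.1.2.1 (χ := Formula.K φ)
      constructor
      · intro h
        have hbox : Formula.K φ ∈ Γ₀ := (box_iff hΓ₀ φ).2 (fun Δ hΔ hsub =>
          (ihφ (⟨⟨Δ, hΔ, hsub⟩, none⟩ : (canonM e Γ₀).W)).1 (h _))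
        exact hiff.1 hbox
      · intro h w'
        exact (ihφ w').2 ((box_iff hΓ₀ φ).1 (hiff.2 h) w'.1.1 w'.1.2.1 w'.1.2.2)

lemma completeness (e : (Finset Q × Bool) ↪ G) {φ : Formula P Q}
    (hval : Valid (Set.univ : FnDom G) φ) : Prov (AxExt P Q) φ := by
  by_contra hP
  have hcons : Consistent (AxExt P Q) {Formula.not φ} := by
    rintro ⟨L, hL, hPL⟩
    obtain ⟨L', hL', hP'⟩ := extract_claim (∅ : Set (Formula P Q)) (Formula.not φ) L
      (fun ψ hψ => Or.inr (hL ψ hψ))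
    have hL'nil : L' = [] := by
      cases L' with
      | nil => rfl
      | cons a t => exact absurd (hL' a (by simp)) (Set.notMem_empty a)
    subst hL'nil
    exact hP (Prov.mp (Prov.mp (t_final φ (conj L)) hP') hPL)
  obtain ⟨Γ₀, hΓ₀, hsub⟩ := consistent_extend hcons
  have hThsub : ThSet Γ₀ ⊆ Γ₀ := fun χ hχ =>
    mcs_mem_mp hΓ₀ hχ (Prov.ax (Or.inl (SLKVF.axT χ)))
  haveI : Nonempty G := ⟨e (∅, true)⟩
  have hsat := hval (canonM e Γ₀) (⟨⟨Γ₀, hΓ₀, hThsub⟩, none⟩ : (canonM e Γ₀).W)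
  have hnot := (truth_lemma e hΓ₀ (Formula.not φ)
    (⟨⟨Γ₀, hΓ₀, hThsub⟩, none⟩ : (canonM e Γ₀).W)).2 (hsub rfl)
  exact hnot hsat

end AuxDev

theorem statement7 (P Q G : Type) [Countable P] [Infinite P] [LinearOrder Q]
    (hcard : Nonempty ((Finset Q × Bool) ↪ G)) :
    ∀ φ : Formula P Q, Prov (AxExt P Q) φ ↔ Valid (Set.univ : FnDom G) φ := by
  intro φ
  haveI : Nonempty G := ⟨hcard.some (∅, true)⟩
  exact ⟨fun h => soundness h, fun h => completeness hcard.some h⟩
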